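/- There exists an absolute constant C ≥ 1 such that the following holds. Let G be a group, let K ≥ 2 be a real number, and let A ⊆ G be a finite nonempty set with |A·A| ≤ K·|A|. Then there exists a finite set H ⊆ G which is a K^C-approximate group (i.e. 1 ∈ H, H⁻¹ = H, and there is a finite set Z ⊆ G with |Z| ≤ K^C and H·H ⊆ Z·H), with |H| ≤ C·K^C·|A|, together with finite sets X, Y ⊆ G with |X| ≤ K^C and |Y| ≤ K^C such that A ⊆ X·H and A ⊆ H·Y. -/

import Mathlib

open Pointwise Finset

namespace SmallDoublingAux

variable {G : Type*} [Group G] [DecidableEq G] {K : ℝ} {A S : Finset G}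

/-- The fiber of `(a, b) ↦ a * b⁻¹` over `g` in `A ×ˢ A` has the same size as `A ∩ g • A`. -/
private lemma fiber_card (A : Finset G) (g : G) :
    ({p ∈ A ×ˢ A | p.1 * p.2⁻¹ = g}).card = (A ∩ g • A).card := by
  apply card_nbij (fun p => p.1)
  · rintro ⟨a, b⟩ hp
    simp only [mem_coe, mem_filter, mem_product] at hp ⊢
    obtain ⟨⟨ha, hb⟩, he⟩ := hp
    refine mem_inter.2 ⟨ha, ?_⟩
    have hab : a = g * b := by rw [← he]; group
    have := smul_mem_smul_finset (a := g) hb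
    rwa [smul_eq_mul, ← hab] at this
  · rintro ⟨a, b⟩ hp ⟨a', b'⟩ hp' h
    simp only [coe_filter, Set.mem_setOf_eq, mem_coe, mem_product] at hp hp'
    dsimp at h
    subst h
    have hb : b = b' := by
      have := hp.2.trans hp'.2.symm
      have h2 : b⁻¹ = b'⁻¹ := mul_left_cancel this
      exact inv_injective h2
    rw [hb]
  · intro x hx
    rw [Finset.coe_inter] at hx
    obtain ⟨h1, h2⟩ := hx
    rw [Finset.mem_coe] at h1 h2
    refine ⟨(x, g⁻¹ * x), ?_, rfl⟩
    simp only [coe_filter, Set.mem_setOf_eq, mem_product]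
    have h3 : g⁻¹ * x ∈ A := by
      have := smul_mem_smul_finset (a := g⁻¹) h2
      rwa [inv_smul_smul, smul_eq_mul] at this
    exact ⟨⟨h1, h3⟩, by group⟩

private lemma sum_inter_eq (A : Finset G) :
    ∑ g ∈ A * A⁻¹, (A ∩ g • A).card = A.card * A.card := by
  have h : (A ×ˢ A).card = ∑ g ∈ A * A⁻¹, ({p ∈ A ×ˢ A | p.1 * p.2⁻¹ = g}).card := by
    refine card_eq_sum_card_fiberwise fun p hp => ?_
    obtain ⟨h1, h2⟩ := mem_product.1 hp
    exact mul_mem_mul h1 (inv_mem_inv h2)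
  calc ∑ g ∈ A * A⁻¹, (A ∩ g • A).card
      = ∑ g ∈ A * A⁻¹, ({p ∈ A ×ˢ A | p.1 * p.2⁻¹ = g}).card :=
        Finset.sum_congr rfl fun g _ => (fiber_card A g).symm
    _ = (A ×ˢ A).card := h.symm
    _ = A.card * A.card := by rw [card_product]

private lemma mulInv_bound (hA : A.Nonempty) (hK0 : 0 ≤ K)
    (hAA : ((A * A).card : ℝ) ≤ K * A.card) :
    ((A * A⁻¹).card : ℝ) ≤ K ^ 2 * A.card := by
  have hApos : (0 : ℝ) < A.card := by exact_mod_cast card_pos.2 hA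
  have h := ruzsa_triangle_inequality_mulInv_mul_mul A A A
  have h' : ((A * A⁻¹).card : ℝ) * A.card ≤ ((A * A).card : ℝ) * (A * A).card := by
    exact_mod_cast h
  have h'' : ((A * A⁻¹).card : ℝ) * A.card ≤ (K * A.card) * (K * A.card) :=
    h'.trans (mul_le_mul hAA hAA (by positivity) (by positivity))
  refine le_of_mul_le_mul_right ?_ hApos
  nlinarith [h'']

private lemma invMul_bound (hA : A.Nonempty) (hK0 : 0 ≤ K)
    (hAA : ((A * A).card : ℝ) ≤ K * A.card) :
    ((A⁻¹ * A).card : ℝ) ≤ K ^ 2 * A.card := by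
  have hApos : (0 : ℝ) < A.card := by exact_mod_cast card_pos.2 hA
  have h := ruzsa_triangle_inequality_invMul_mul_mul A A A
  have h' : (A.card : ℝ) * (A⁻¹ * A).card ≤ ((A * A).card : ℝ) * (A * A).card := by
    exact_mod_cast h
  have h'' : (A.card : ℝ) * (A⁻¹ * A).card ≤ (K * A.card) * (K * A.card) :=
    h'.trans (mul_le_mul hAA hAA (by positivity) (by positivity))
  refine le_of_mul_le_mul_right ?_ hApos
  nlinarith [h'']

/-- Lower bound on the size of the symmetry set. -/
private lemma half_card_le (hK : 2 ≤ K) (hA : A.Nonempty)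
    (hAinv : ((A * A⁻¹).card : ℝ) ≤ K ^ 2 * A.card)
    (hout : ∀ g ∈ A * A⁻¹, g ∉ S → 2 * K ^ 2 * ((A ∩ g • A).card : ℝ) ≤ A.card) :
    (A.card : ℝ) ≤ 2 * S.card := by
  have hK0 : (0 : ℝ) < K := by linarith
  have hApos : (0 : ℝ) < A.card := by exact_mod_cast card_pos.2 hA
  have htot : ∑ g ∈ A * A⁻¹, ((A ∩ g • A).card : ℝ) = (A.card : ℝ) * A.card := by
    rw [← Nat.cast_sum, sum_inter_eq]; push_cast; ring
  have hsplit := Finset.sum_filter_add_sum_filter_not (A * A⁻¹) (· ∈ S)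
    (fun g => ((A ∩ g • A).card : ℝ))
  have h1 : ∑ g ∈ (A * A⁻¹).filter (· ∈ S), ((A ∩ g • A).card : ℝ)
      ≤ (S.card : ℝ) * A.card := by
    calc ∑ g ∈ (A * A⁻¹).filter (· ∈ S), ((A ∩ g • A).card : ℝ)
        ≤ ∑ _g ∈ (A * A⁻¹).filter (· ∈ S), (A.card : ℝ) := by
          refine Finset.sum_le_sum fun g _ => ?_
          exact_mod_cast card_le_card inter_subset_left
      _ = (((A * A⁻¹).filter (· ∈ S)).card : ℝ) * A.card := by
          rw [Finset.sum_const, nsmul_eq_mul]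
      _ ≤ (S.card : ℝ) * A.card := by
          have hsub : (A * A⁻¹).filter (· ∈ S) ⊆ S := fun g hg => (mem_filter.1 hg).2
          have hcc : ((((A * A⁻¹).filter (· ∈ S))).card : ℝ) ≤ (S.card : ℝ) := by
            exact_mod_cast card_le_card hsub
          exact mul_le_mul_of_nonneg_right hcc (by positivity)
  have h2 : ∑ g ∈ (A * A⁻¹).filter (· ∉ S), ((A ∩ g • A).card : ℝ)
      ≤ (A.card : ℝ) * A.card / 2 := by
    have hterm : ∀ g ∈ (A * A⁻¹).filter (· ∉ S),
        ((A ∩ g • A).card : ℝ) ≤ (A.card : ℝ) / (2 * K ^ 2) := by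
      intro g hg
      obtain ⟨hg1, hg2⟩ := mem_filter.1 hg
      have := hout g hg1 hg2
      rw [le_div_iff₀ (by positivity)]
      linarith
    have hfil : (((A * A⁻¹).filter (· ∉ S)).card : ℝ) ≤ K ^ 2 * A.card := by
      refine le_trans ?_ hAinv
      exact_mod_cast card_le_card (filter_subset _ _)
    calc ∑ g ∈ (A * A⁻¹).filter (· ∉ S), ((A ∩ g • A).card : ℝ)
        ≤ ∑ _g ∈ (A * A⁻¹).filter (· ∉ S), (A.card : ℝ) / (2 * K ^ 2) :=
          Finset.sum_le_sum hterm
      _ = (((A * A⁻¹).filter (· ∉ S)).card : ℝ) * ((A.card : ℝ) / (2 * K ^ 2)) := by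
          rw [Finset.sum_const, nsmul_eq_mul]
      _ ≤ (K ^ 2 * A.card) * ((A.card : ℝ) / (2 * K ^ 2)) := by
          gcongr
      _ = (A.card : ℝ) * A.card / 2 := by field_simp
  have hcomb : (A.card : ℝ) * A.card ≤ (S.card : ℝ) * A.card + (A.card : ℝ) * A.card / 2 := by
    rw [← htot, ← hsplit]; linarith
  have : (A.card : ℝ) * A.card / 2 ≤ (S.card : ℝ) * A.card := by linarith
  have h3 : (A.card : ℝ) / 2 ≤ S.card := by
    refine le_of_mul_le_mul_right ?_ hApos
    calc (A.card : ℝ) / 2 * A.card = (A.card : ℝ) * A.card / 2 := by ring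
      _ ≤ (S.card : ℝ) * A.card := this
  linarith

/-- Key tripling bound for the symmetry set. -/
private lemma triple_bound (hK0 : 0 < K) (hA : A.Nonempty)
    (hIA : ((A⁻¹ * A).card : ℝ) ≤ K ^ 2 * A.card)
    (hmem : ∀ g ∈ S, (A.card : ℝ) ≤ 2 * K ^ 2 * ((A ∩ g • A).card : ℝ))
    (hsym : S⁻¹ = S) :
    ((S * S * S).card : ℝ) ≤ 8 * K ^ 10 * A.card := by
  classical
  have hApos : (0 : ℝ) < A.card := by exact_mod_cast card_pos.2 hA
  set T : Finset (G × G × G × G) := A ×ˢ ((A⁻¹ * A) ×ˢ ((A⁻¹ * A) ×ˢ A)) with hT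
  set π : G × G × G × G → G := fun t => t.1 * t.2.1 * t.2.2.1 * t.2.2.2⁻¹ with hπ
  -- Step 1: every z ∈ S*S*S has a big fiber
  have step1 : ∀ z ∈ S * S * S,
      (A.card : ℝ) ^ 3 ≤ 8 * K ^ 6 * (({t ∈ T | π t = z}).card : ℝ) := by
    intro z hz
    obtain ⟨u, hu, w, hw, rfl⟩ := mem_mul.1 hz
    obtain ⟨x, hx, y, hy, rfl⟩ := mem_mul.1 hu
    have hx' : x⁻¹ ∈ S := by rw [← hsym]; exact inv_mem_inv hx
    have hinj : ((A ∩ x⁻¹ • A) ×ˢ ((A ∩ y • A) ×ˢ (A ∩ w • A))).card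
        ≤ ({t ∈ T | π t = x * y * w}).card := by
      apply card_le_card_of_injOn
        (fun c => (x * c.1, c.1⁻¹ * c.2.1, c.2.1⁻¹ * (y * c.2.2), w⁻¹ * c.2.2))
      · rintro ⟨c, f, d⟩ hc
        simp only [mem_coe, mem_product, mem_inter] at hc ⊢
        obtain ⟨⟨hcA, hcx⟩, ⟨hfA, hfy⟩, hdA, hdw⟩ := hc
        have h1 : x * c ∈ A := by
          have := smul_mem_smul_finset (a := x) hcx
          rwa [smul_inv_smul, smul_eq_mul] at this
        have h2 : y⁻¹ * f ∈ A := by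
          have := smul_mem_smul_finset (a := y⁻¹) hfy
          rwa [inv_smul_smul, smul_eq_mul] at this
        have h3 : w⁻¹ * d ∈ A := by
          have := smul_mem_smul_finset (a := w⁻¹) hdw
          rwa [inv_smul_smul, smul_eq_mul] at this
        refine mem_filter.2 ⟨?_, ?_⟩
        · simp only [hT, mem_product]
          refine ⟨h1, ?_, ?_, h3⟩
          · exact mul_mem_mul (inv_mem_inv hcA) hfA
          · have : f⁻¹ * (y * d) = (y⁻¹ * f)⁻¹ * d := by group
            rw [this]
            exact mul_mem_mul (inv_mem_inv h2) hdA
        · show (x * c) * (c⁻¹ * f) * (f⁻¹ * (y * d)) * (w⁻¹ * d)⁻¹ = x * y * w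
          group
      · rintro ⟨c, f, d⟩ - ⟨c', f', d'⟩ - heq
        simp only [Prod.mk.injEq] at heq
        obtain ⟨e1, e2, -, e4⟩ := heq
        have hc : c = c' := mul_left_cancel e1
        subst hc
        have hf : f = f' := mul_left_cancel e2
        have hd : d = d' := mul_left_cancel e4
        rw [hf, hd]
    have e1 := hmem x⁻¹ hx'
    have e2 := hmem y hy
    have e3 := hmem w hw
    have hcards : (((A ∩ x⁻¹ • A) ×ˢ ((A ∩ y • A) ×ˢ (A ∩ w • A))).card : ℝ)
        = ((A ∩ x⁻¹ • A).card : ℝ) * (((A ∩ y • A).card : ℝ) * ((A ∩ w • A).card : ℝ)) := by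
      rw [card_product, card_product]; push_cast; ring
    calc (A.card : ℝ) ^ 3 = (A.card : ℝ) * (A.card : ℝ) * (A.card : ℝ) := by ring
      _ ≤ (2 * K ^ 2 * ((A ∩ x⁻¹ • A).card : ℝ)) * (2 * K ^ 2 * ((A ∩ y • A).card : ℝ))
          * (2 * K ^ 2 * ((A ∩ w • A).card : ℝ)) := by
          have p1 : (0:ℝ) ≤ (A.card : ℝ) := hApos.le
          exact mul_le_mul (mul_le_mul e1 e2 p1 (by positivity)) e3 p1 (by positivity)
      _ = 8 * K ^ 6 * (((A ∩ x⁻¹ • A).card : ℝ)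
          * (((A ∩ y • A).card : ℝ) * ((A ∩ w • A).card : ℝ))) := by ring
      _ ≤ 8 * K ^ 6 * (({t ∈ T | π t = x * y * w}).card : ℝ) := by
          rw [← hcards]
          exact mul_le_mul_of_nonneg_left (by exact_mod_cast hinj) (by positivity)
  -- Step 2: fibers are essentially disjoint inside T
  have step2 : ∑ z ∈ S * S * S, (({t ∈ T | π t = z}).card) ≤ T.card := by
    have hfib : (({t ∈ T | π t ∈ S * S * S}).card)
        = ∑ z ∈ S * S * S, ({t' ∈ {t ∈ T | π t ∈ S * S * S} | π t' = z}).card :=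
      card_eq_sum_card_fiberwise fun t ht => (mem_filter.1 ht).2
    have heq : ∀ z ∈ S * S * S,
        {t' ∈ {t ∈ T | π t ∈ S * S * S} | π t' = z} = {t ∈ T | π t = z} := by
      intro z hz
      ext t
      simp only [mem_filter]
      constructor
      · rintro ⟨⟨h1, -⟩, h3⟩; exact ⟨h1, h3⟩
      · rintro ⟨h1, h3⟩; exact ⟨⟨h1, h3 ▸ hz⟩, h3⟩
    calc ∑ z ∈ S * S * S, (({t ∈ T | π t = z}).card)
        = ∑ z ∈ S * S * S, ({t' ∈ {t ∈ T | π t ∈ S * S * S} | π t' = z}).card :=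
          Finset.sum_congr rfl fun z hz => by rw [heq z hz]
      _ = ({t ∈ T | π t ∈ S * S * S}).card := hfib.symm
      _ ≤ T.card := card_le_card (filter_subset _ _)
  -- Combine
  have hTcard : (T.card : ℝ) ≤ K ^ 4 * (A.card : ℝ) ^ 4 := by
    have : (T.card : ℝ) = (A.card : ℝ) * (((A⁻¹ * A).card : ℝ)
        * (((A⁻¹ * A).card : ℝ) * (A.card : ℝ))) := by
      rw [hT, card_product, card_product, card_product]; push_cast; ring
    rw [this]
    calc (A.card : ℝ) * (((A⁻¹ * A).card : ℝ) * (((A⁻¹ * A).card : ℝ) * (A.card : ℝ)))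
        ≤ (A.card : ℝ) * ((K ^ 2 * A.card) * ((K ^ 2 * A.card) * (A.card : ℝ))) := by
          gcongr
      _ = K ^ 4 * (A.card : ℝ) ^ 4 := by ring
  have main : ((S * S * S).card : ℝ) * (A.card : ℝ) ^ 3
      ≤ 8 * K ^ 10 * (A.card : ℝ) ^ 4 := by
    calc ((S * S * S).card : ℝ) * (A.card : ℝ) ^ 3
        = ∑ _z ∈ S * S * S, (A.card : ℝ) ^ 3 := by rw [Finset.sum_const, nsmul_eq_mul]
      _ ≤ ∑ z ∈ S * S * S, 8 * K ^ 6 * (({t ∈ T | π t = z}).card : ℝ) :=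
          Finset.sum_le_sum step1
      _ = 8 * K ^ 6 * ∑ z ∈ S * S * S, (({t ∈ T | π t = z}).card : ℝ) := by
          rw [Finset.mul_sum]
      _ ≤ 8 * K ^ 6 * (T.card : ℝ) := by
          gcongr
          exact_mod_cast step2
      _ ≤ 8 * K ^ 6 * (K ^ 4 * (A.card : ℝ) ^ 4) := by gcongr
      _ = 8 * K ^ 10 * (A.card : ℝ) ^ 4 := by ring
  have hA3 : (0 : ℝ) < (A.card : ℝ) ^ 3 := by positivity
  refine le_of_mul_le_mul_right ?_ hA3
  calc ((S * S * S).card : ℝ) * (A.card : ℝ) ^ 3 ≤ 8 * K ^ 10 * (A.card : ℝ) ^ 4 := main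
    _ = 8 * K ^ 10 * A.card * (A.card : ℝ) ^ 3 := by ring

/-- Products with the symmetry set don't grow much. -/
private lemma mul_symset_bound (hK0 : 0 < K) (hA : A.Nonempty) (B : Finset G)
    (hmem : ∀ g ∈ S, (A.card : ℝ) ≤ 2 * K ^ 2 * ((A ∩ g • A).card : ℝ))
    (hsym : S⁻¹ = S) :
    ((B * S).card : ℝ) ≤ 2 * K ^ 2 * (B * A).card := by
  classical
  have hApos : (0 : ℝ) < A.card := by exact_mod_cast card_pos.2 hA
  have key : ∀ z ∈ B * S, (A.card : ℝ) ≤ 2 * K ^ 2 * ((A ∩ z⁻¹ • (B * A)).card : ℝ) := by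
    intro z hz
    obtain ⟨b, hb, s, hs, rfl⟩ := mem_mul.1 hz
    have hs' : s⁻¹ ∈ S := by rw [← hsym]; exact inv_mem_inv hs
    refine (hmem s⁻¹ hs').trans ?_
    have hsub : A ∩ s⁻¹ • A ⊆ A ∩ (b * s)⁻¹ • (B * A) := by
      intro q hq
      obtain ⟨hqA, hqs⟩ := mem_inter.1 hq
      have h1 : s * q ∈ A := by
        have := smul_mem_smul_finset (a := s) hqs
        rwa [smul_inv_smul, smul_eq_mul] at this
      refine mem_inter.2 ⟨hqA, ?_⟩
      have h2 : (b * s) * q ∈ B * A := by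
        rw [mul_assoc]; exact mul_mem_mul hb h1
      have := smul_mem_smul_finset (a := (b * s)⁻¹) h2
      rwa [smul_eq_mul, ← mul_assoc, inv_mul_cancel, one_mul] at this
    exact mul_le_mul_of_nonneg_left (by exact_mod_cast card_le_card hsub) (by positivity)
  have hsig : ∑ z ∈ B * S, (A ∩ z⁻¹ • (B * A)).card ≤ (B * A).card * A.card := by
    calc ∑ z ∈ B * S, (A ∩ z⁻¹ • (B * A)).card
        = ((B * S).sigma fun z => A ∩ z⁻¹ • (B * A)).card := (card_sigma _ _).symm
      _ ≤ ((B * A) ×ˢ A).card := by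
          apply card_le_card_of_injOn (fun t => (t.1 * t.2, t.2))
          · rintro ⟨z, q⟩ ht
            obtain ⟨hz, hq⟩ := mem_sigma.1 ht
            obtain ⟨hqA, hq2⟩ := mem_inter.1 hq
            have h1 : z * q ∈ B * A := by
              have := smul_mem_smul_finset (a := z) hq2
              rwa [smul_inv_smul, smul_eq_mul] at this
            exact mem_product.2 ⟨h1, hqA⟩
          · rintro ⟨z, q⟩ - ⟨z', q'⟩ - heq
            simp only [Prod.mk.injEq] at heq
            obtain ⟨e1, e2⟩ := heq
            subst e2
            have hz : z = z' := mul_right_cancel e1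
            rw [hz]
      _ = (B * A).card * A.card := by rw [card_product]
  have main : ((B * S).card : ℝ) * A.card ≤ (2 * K ^ 2 * (B * A).card) * A.card := by
    calc ((B * S).card : ℝ) * A.card = ∑ _z ∈ B * S, (A.card : ℝ) := by
          rw [Finset.sum_const, nsmul_eq_mul]
      _ ≤ ∑ z ∈ B * S, 2 * K ^ 2 * ((A ∩ z⁻¹ • (B * A)).card : ℝ) :=
          Finset.sum_le_sum key
      _ = 2 * K ^ 2 * ∑ z ∈ B * S, ((A ∩ z⁻¹ • (B * A)).card : ℝ) := by
          rw [Finset.mul_sum]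
      _ ≤ 2 * K ^ 2 * ((B * A).card * A.card) := by
          gcongr
          exact_mod_cast hsig
      _ = (2 * K ^ 2 * (B * A).card) * A.card := by ring
  exact le_of_mul_le_mul_right main hApos

end SmallDoublingAux

/-- Control of sets of small doubling by approximate groups: if `|A·A| ≤ K|A|` with `K ≥ 2`,
then there is a `K^C`-approximate group `H` of size `≤ C·K^C·|A|` such that `A` is covered
by `K^C` left-translates and by `K^C` right-translates of `H`. -/
theorem small_doubling_controlled_by_approximate_group :
    ∃ C : ℝ, 1 ≤ C ∧
      ∀ (G : Type*) [Group G] [DecidableEq G] (K : ℝ), 2 ≤ K →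
        ∀ A : Finset G, A.Nonempty → ((A * A).card : ℝ) ≤ K * A.card →
          ∃ H : Finset G,
            ((1 : G) ∈ H ∧ H⁻¹ = H ∧
              ∃ Z : Finset G, (Z.card : ℝ) ≤ K ^ C ∧ H * H ⊆ Z * H) ∧
            (H.card : ℝ) ≤ C * K ^ C * A.card ∧
            ∃ X Y : Finset G, (X.card : ℝ) ≤ K ^ C ∧ (Y.card : ℝ) ≤ K ^ C ∧
              A ⊆ X * H ∧ A ⊆ H * Y := by
  classical
  refine ⟨42, by norm_num, ?_⟩
  intro G _ _ K hK A hA hAA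
  have hK0 : (0 : ℝ) < K := by linarith
  have hK1 : (1 : ℝ) ≤ K := by linarith
  have hApos : (0 : ℝ) < A.card := by exact_mod_cast Finset.card_pos.2 hA
  have hC : K ^ (42 : ℝ) = K ^ (42 : ℕ) := by
    rw [← Real.rpow_natCast K 42]; norm_num
  have hAinv := SmallDoublingAux.mulInv_bound hA hK0.le hAA
  have hIA := SmallDoublingAux.invMul_bound hA hK0.le hAA
  set S : Finset G :=
    (A * A⁻¹).filter (fun g => (A.card : ℝ) ≤ 2 * K ^ 2 * ((A ∩ g • A).card : ℝ)) with hSdef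
  have hmem : ∀ g ∈ S, (A.card : ℝ) ≤ 2 * K ^ 2 * ((A ∩ g • A).card : ℝ) :=
    fun g hg => (Finset.mem_filter.1 hg).2
  have hout : ∀ g ∈ A * A⁻¹, g ∉ S → 2 * K ^ 2 * ((A ∩ g • A).card : ℝ) ≤ A.card := by
    intro g hg hgs
    by_contra hcon
    push_neg at hcon
    exact hgs (Finset.mem_filter.2 ⟨hg, hcon.le⟩)
  -- symmetry of S
  have hAAinv : (A * A⁻¹)⁻¹ = A * A⁻¹ := by rw [mul_inv_rev, inv_inv]
  have hcardsym : ∀ g : G, (A ∩ g⁻¹ • A).card = (A ∩ g • A).card := by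
    intro g
    calc (A ∩ g⁻¹ • A).card = (g • (A ∩ g⁻¹ • A)).card := (Finset.card_smul_finset g _).symm
      _ = ((g • A) ∩ A).card := by rw [Finset.smul_finset_inter, smul_inv_smul]
      _ = (A ∩ g • A).card := by rw [Finset.inter_comm]
  have hsym : S⁻¹ = S := by
    ext g
    have hmi : g ∈ S⁻¹ ↔ g⁻¹ ∈ S := by
      simp only [Finset.mem_inv]
      constructor
      · rintro ⟨y, hy, rfl⟩; simpa using hy
      · intro h; exact ⟨g⁻¹, h, by simp⟩
    rw [hmi, hSdef]
    simp only [Finset.mem_filter]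
    constructor
    · rintro ⟨h1, h2⟩
      have h1' : g ∈ A * A⁻¹ := by
        have := Finset.inv_mem_inv h1
        rw [inv_inv, hAAinv] at this
        exact this
      refine ⟨h1', ?_⟩
      rw [← hcardsym g]; exact h2
    · rintro ⟨h1, h2⟩
      have h1' : g⁻¹ ∈ A * A⁻¹ := by
        have := Finset.inv_mem_inv h1
        rwa [hAAinv] at this
      refine ⟨h1', ?_⟩
      rw [hcardsym g]; exact h2
  -- 1 ∈ S
  have h1S : (1 : G) ∈ S := by
    obtain ⟨a, ha⟩ := hA
    refine Finset.mem_filter.2 ⟨?_, ?_⟩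
    · exact Finset.mem_mul.2 ⟨a, ha, a⁻¹, Finset.inv_mem_inv ha, mul_inv_cancel a⟩
    · rw [one_smul, Finset.inter_self]
      nlinarith [hApos]
  have hSne : S.Nonempty := ⟨1, h1S⟩
  -- size bounds
  have hShalf : (A.card : ℝ) ≤ 2 * S.card := SmallDoublingAux.half_card_le hK hA hAinv hout
  have hS3 : ((S * S * S).card : ℝ) ≤ 8 * K ^ 10 * A.card :=
    SmallDoublingAux.triple_bound hK0 hA hIA hmem hsym
  have hS3pow : S ^ 3 = S * S * S := by rw [pow_succ, pow_succ, pow_one]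
  have hS3' : ((S ^ 3).card : ℝ) ≤ 16 * K ^ 10 * S.card := by
    rw [hS3pow]
    calc ((S * S * S).card : ℝ) ≤ 8 * K ^ 10 * A.card := hS3
      _ ≤ 8 * K ^ 10 * (2 * S.card) :=
          mul_le_mul_of_nonneg_left hShalf (by positivity)
      _ = 16 * K ^ 10 * S.card := by ring
  -- small quintupling
  have hS5 : ((S ^ 5).card : ℝ) ≤ (16 * K ^ 10) ^ 3 * S.card := by
    have := Finset.small_pow_of_small_tripling (m := 5) (by norm_num) hS3' hsym
    norm_num at this
    exact this
  -- covering of S^4 by translates of S^2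
  have hSdiv : S / S = S ^ 2 := by
    rw [div_eq_mul_inv, hsym, sq]
  have hS45 : S ^ 4 * S = S ^ 5 := by rw [← pow_succ]
  obtain ⟨F, hFsub, hFcard, hFcover⟩ :=
    Finset.ruzsa_covering_mul hSne (by rw [hS45]; exact hS5)
  rw [hSdiv] at hFcover
  -- covering of A by left translates of S^2
  have hAS : ((A * S).card : ℝ) ≤ 4 * K ^ 3 * S.card := by
    calc ((A * S).card : ℝ) ≤ 2 * K ^ 2 * (A * A).card :=
          SmallDoublingAux.mul_symset_bound hK0 hA A hmem hsym
      _ ≤ 2 * K ^ 2 * (K * A.card) := by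
          have : (0:ℝ) ≤ 2 * K ^ 2 := by positivity
          exact mul_le_mul_of_nonneg_left hAA this
      _ ≤ 2 * K ^ 2 * (K * (2 * S.card)) := by
          have h := mul_le_mul_of_nonneg_left hShalf hK0.le
          exact mul_le_mul_of_nonneg_left h (by positivity)
      _ = 4 * K ^ 3 * S.card := by ring
  obtain ⟨X, hXsub, hXcard, hXcover⟩ := Finset.ruzsa_covering_mul hSne hAS
  rw [hSdiv] at hXcover
  -- covering of A⁻¹ by left translates of S^2, giving right translates for A
  have hAiS : ((A⁻¹ * S).card : ℝ) ≤ 4 * K ^ 4 * S.card := by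
    calc ((A⁻¹ * S).card : ℝ) ≤ 2 * K ^ 2 * (A⁻¹ * A).card :=
          SmallDoublingAux.mul_symset_bound hK0 hA A⁻¹ hmem hsym
      _ ≤ 2 * K ^ 2 * (K ^ 2 * A.card) := by
          exact mul_le_mul_of_nonneg_left hIA (by positivity)
      _ ≤ 2 * K ^ 2 * (K ^ 2 * (2 * S.card)) := by
          have h := mul_le_mul_of_nonneg_left hShalf (by positivity : (0:ℝ) ≤ K ^ 2)
          exact mul_le_mul_of_nonneg_left h (by positivity)
      _ = 4 * K ^ 4 * S.card := by ring
  obtain ⟨F', hF'sub, hF'card, hF'cover⟩ := Finset.ruzsa_covering_mul hSne hAiS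
  rw [hSdiv] at hF'cover
  -- assemble
  have hpow42 : ∀ n : ℕ, n ≤ 42 → K ^ n ≤ K ^ (42 : ℕ) := fun n hn =>
    pow_le_pow_right₀ hK1 hn
  have h2pow : ∀ n : ℕ, ((2 : ℝ) ^ n) ≤ K ^ n := fun n => by gcongr
  refine ⟨S ^ 2, ⟨?_, ?_, F, ?_, ?_⟩, ?_, X, F'⁻¹, ?_, ?_, ?_, ?_⟩
  · -- 1 ∈ S^2
    rw [sq]
    simpa using Finset.mul_mem_mul h1S h1S
  · -- symmetric
    rw [← inv_pow, hsym]
  · -- card F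
    rw [hC]
    calc (F.card : ℝ) ≤ (16 * K ^ 10) ^ 3 := hFcard
      _ = 4096 * K ^ 30 := by ring
      _ ≤ K ^ 12 * K ^ 30 := by
          gcongr
          calc (4096 : ℝ) = 2 ^ 12 := by norm_num
            _ ≤ K ^ 12 := h2pow 12
      _ = K ^ (42 : ℕ) := by rw [← pow_add]
  · -- H * H ⊆ F * H
    calc S ^ 2 * S ^ 2 = S ^ 4 := by rw [← pow_add]
      _ ⊆ F * S ^ 2 := hFcover
  · -- card H
    rw [hC]
    have hmono : ((S ^ 2).card : ℝ) ≤ ((S ^ 3).card : ℝ) := by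
      exact_mod_cast Finset.card_pow_mono (two_ne_zero) (by norm_num)
    calc ((S ^ 2).card : ℝ) ≤ ((S ^ 3).card : ℝ) := hmono
      _ ≤ 8 * K ^ 10 * A.card := by rw [hS3pow]; exact hS3
      _ ≤ 42 * K ^ (42 : ℕ) * A.card := by
          have h8 : (8 : ℝ) ≤ 42 := by norm_num
          have hp : K ^ 10 ≤ K ^ (42 : ℕ) := hpow42 10 (by norm_num)
          have h42 : (0:ℝ) ≤ K ^ (42 : ℕ) := by positivity
          have : (8 : ℝ) * K ^ 10 ≤ 42 * K ^ (42 : ℕ) := by linarith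
          exact mul_le_mul_of_nonneg_right this hApos.le
  · -- card X
    rw [hC]
    calc (X.card : ℝ) ≤ 4 * K ^ 3 := hXcard
      _ ≤ K ^ 2 * K ^ 3 := by
          gcongr
          calc (4 : ℝ) = 2 ^ 2 := by norm_num
            _ ≤ K ^ 2 := h2pow 2
      _ = K ^ (5 : ℕ) := by rw [← pow_add]
      _ ≤ K ^ (42 : ℕ) := hpow42 5 (by norm_num)
  · -- card Y
    rw [hC, Finset.card_inv]
    calc (F'.card : ℝ) ≤ 4 * K ^ 4 := hF'card
      _ ≤ K ^ 2 * K ^ 4 := by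
          gcongr
          calc (4 : ℝ) = 2 ^ 2 := by norm_num
            _ ≤ K ^ 2 := h2pow 2
      _ = K ^ (6 : ℕ) := by rw [← pow_add]
      _ ≤ K ^ (42 : ℕ) := hpow42 6 (by norm_num)
  · -- A ⊆ X * S^2
    exact hXcover
  · -- A ⊆ S^2 * F'⁻¹
    intro a ha
    have h1 : a⁻¹ ∈ F' * S ^ 2 := hF'cover (Finset.inv_mem_inv ha)
    have h2 : a ∈ (F' * S ^ 2)⁻¹ := by
      rw [← inv_inv a]
      exact Finset.inv_mem_inv h1
    rwa [mul_inv_rev, ← inv_pow, hsym] at h2
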